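/- Let D be a digraph, S = u_1 u_2 ⋯ u_s a directed trail in D, and x ∈ V(D). If D does not contain a directed trail from u_1 to u_s with vertex set V(S) ∪ {x}, then d_S(x) ≤ |V(S)|, where d_S(x) = d⁻_S(x) + d⁺_S(x). -/

import Mathlib

/-- A digraph: loopless, no parallel arcs (arcs given by a relation). -/
structure Digr (V : Type) where
  Adj : V → V → Prop
  loopless : ∀ v, ¬ Adj v v

namespace Digr

variable {V : Type}

/-- The list of arcs (consecutive pairs) of a walk given by its list of vertices. -/
def arcs (l : List V) : List (V × V) := l.zip l.tail

/-- The vertex set of a walk. -/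
def verts (l : List V) : Set V := {v | v ∈ l}

/-- A directed trail: a nonempty walk repeating no arc. -/
def IsDitrail (D : Digr V) (l : List V) : Prop :=
  l ≠ [] ∧ l.Chain' D.Adj ∧ (arcs l).Nodup

/-- A closed directed trail. -/
def IsClosedDitrail (D : Digr V) (l : List V) : Prop :=
  D.IsDitrail l ∧ l.head? = l.getLast?

/-- A digraph is supereulerian if it has a spanning closed ditrail. -/
def Supereulerian (D : Digr V) : Prop :=
  ∃ l : List V, D.IsClosedDitrail l ∧ ∀ v : V, v ∈ l

/-- Strong connectivity. -/
def Strong (D : Digr V) : Prop :=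
  ∀ u v : V, Relation.ReflTransGen D.Adj u v

noncomputable def outDeg (D : Digr V) (v : V) : ℕ := {w | D.Adj v w}.ncard
noncomputable def inDeg (D : Digr V) (v : V) : ℕ := {w | D.Adj w v}.ncard
noncomputable def deg (D : Digr V) (v : V) : ℕ := D.inDeg v + D.outDeg v

noncomputable def outDegOn (D : Digr V) (S : Set V) (v : V) : ℕ := {w ∈ S | D.Adj v w}.ncard
noncomputable def inDegOn (D : Digr V) (S : Set V) (v : V) : ℕ := {w ∈ S | D.Adj w v}.ncard
noncomputable def degOn (D : Digr V) (S : Set V) (v : V) : ℕ := D.inDegOn S v + D.outDegOn S v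

def Nonadjacent (D : Digr V) (u v : V) : Prop := ¬ D.Adj u v ∧ ¬ D.Adj v u
def Dominated (D : Digr V) (u v : V) : Prop := ∃ w, D.Adj w u ∧ D.Adj w v
def Dominating (D : Digr V) (u v : V) : Prop := ∃ w, D.Adj u w ∧ D.Adj v w

/-- A semicomplete multipartite digraph: a biorientation of a complete
multipartite graph, i.e. two vertices are joined by an arc (in some direction)
iff they lie in different parts of some partition. -/
def IsSemicompleteMultipartite (D : Digr V) : Prop :=
  ∃ (ι : Type) (part : V → ι), ∀ u v : V, (D.Adj u v ∨ D.Adj v u) ↔ part u ≠ part v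

end Digr


namespace Digr

variable {V : Type}

lemma arcs_cons_cons (a b : V) (l : List V) :
    arcs (a :: b :: l) = (a, b) :: arcs (b :: l) := rfl

lemma arcs_split (l1 l2 : List V) (c : V) :
    arcs (l1 ++ c :: l2) = arcs (l1 ++ [c]) ++ arcs (c :: l2) := by
  induction l1 with
  | nil => simp [arcs]
  | cons a t ih =>
    cases t with
    | nil => simp [arcs_cons_cons, arcs]
    | cons b t' =>
      simp only [List.cons_append] at ih ⊢
      rw [arcs_cons_cons, arcs_cons_cons, ih, List.cons_append]

lemma mem_of_mem_arcs {p : V × V} {l : List V} (h : p ∈ arcs l) :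
    p.1 ∈ l ∧ p.2 ∈ l := by
  obtain ⟨p1, p2⟩ := p
  have := List.of_mem_zip h
  exact ⟨this.1, List.mem_of_mem_tail this.2⟩

lemma getLast?_append_of_ne_nil' (l1 : List V) {l2 : List V} (h : l2 ≠ []) :
    (l1 ++ l2).getLast? = l2.getLast? := by
  rw [List.getLast?_append, List.getLast?_eq_getLast h]; rfl

end Digr

/-- Corollary: if $D$ has no $(u_1,u_s)$-ditrail with vertex set
$V(S) ∪ \{x\}$, then $d_S(x) ≤ |V(S)|$. -/
theorem stmt1 {V : Type} (D : Digr V) (s : List V) (x : V)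
    (hs : D.IsDitrail s)
    (hno : ¬ ∃ l : List V, D.IsDitrail l ∧ l.head? = s.head? ∧
      l.getLast? = s.getLast? ∧
      Digr.verts l = Digr.verts s ∪ {x}) :
    D.degOn (Digr.verts s) x ≤ (Digr.verts s).ncard := by
    classical
  -- x is not a vertex of s
  have hx : x ∉ Digr.verts s := by
    intro hx
    exact hno ⟨s, hs, rfl, rfl, (Set.union_eq_self_of_subset_right
      (Set.singleton_subset_iff.2 hx)).symm⟩
  -- no vertex of s has arcs to and from x
  have hvb : ∀ v ∈ s, ¬ (D.Adj v x ∧ D.Adj x v) := by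
    rintro v hv ⟨h1, h2⟩
    obtain ⟨a, b, rfl⟩ := List.append_of_mem hv
    have hxs : x ∉ a ++ v :: b := hx
    have hvx : v ≠ x := fun h => hxs (h ▸ hv)
    apply hno
    refine ⟨a ++ v :: x :: v :: b, ⟨by simp, ?_, ?_⟩, ?_, ?_, ?_⟩
    · -- chain'
      have hc := hs.2.1
      rw [List.Chain', List.isChain_split] at hc ⊢
      refine ⟨hc.1, ?_⟩
      rw [List.isChain_cons_cons, List.isChain_cons_cons]
      exact ⟨h1, h2, hc.2⟩
    · -- nodup arcs
      have hnd := hs.2.2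
      rw [Digr.arcs_split] at hnd ⊢
      rw [Digr.arcs_cons_cons, Digr.arcs_cons_cons]
      have hsub1 : ∀ w, w ∈ a ++ [v] → w ∈ a ++ v :: b := by
        intro w hw; simp only [List.mem_append, List.mem_cons, List.mem_singleton] at hw ⊢; tauto
      have hsub2 : ∀ w, w ∈ v :: b → w ∈ a ++ v :: b := by
        intro w hw; simp only [List.mem_append, List.mem_cons] at hw ⊢; tauto
      have hxarc1 : ∀ p ∈ Digr.arcs (a ++ [v]), p.1 ≠ x ∧ p.2 ≠ x := by
        intro p hp
        have h := Digr.mem_of_mem_arcs hp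
        exact ⟨fun e => hxs (e ▸ hsub1 _ h.1), fun e => hxs (e ▸ hsub1 _ h.2)⟩
      have hxarc2 : ∀ p ∈ Digr.arcs (v :: b), p.1 ≠ x ∧ p.2 ≠ x := by
        intro p hp
        have h := Digr.mem_of_mem_arcs hp
        exact ⟨fun e => hxs (e ▸ hsub2 _ h.1), fun e => hxs (e ▸ hsub2 _ h.2)⟩
      rw [List.nodup_append'] at hnd ⊢
      refine ⟨hnd.1, ?_, ?_⟩
      · rw [List.nodup_cons, List.nodup_cons]
        refine ⟨?_, ?_, hnd.2.1⟩
        · intro h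
          rcases List.mem_cons.1 h with h | h
          · exact hvx (by simpa using congrArg Prod.fst h)
          · exact (hxarc2 _ h).2 rfl
        · intro h
          exact (hxarc2 _ h).1 rfl
      · intro p hp hq
        simp only [List.mem_cons] at hq
        rcases hq with hq | hq | hq
        · exact (hxarc1 _ hp).2 (congrArg Prod.snd hq)
        · exact (hxarc1 _ hp).1 (congrArg Prod.fst hq)
        · exact hnd.2.2 hp hq
    · -- head?
      cases a <;> simp
    · -- getLast?
      rw [Digr.getLast?_append_of_ne_nil' a (by simp),
          Digr.getLast?_append_of_ne_nil' a (by simp)]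
      cases b with
      | nil => rfl
      | cons c b' =>
        rw [show v :: x :: v :: c :: b' = [v, x, v] ++ c :: b' from rfl,
            show v :: c :: b' = [v] ++ c :: b' from rfl,
            Digr.getLast?_append_of_ne_nil' _ (by simp),
            Digr.getLast?_append_of_ne_nil' _ (by simp)]
    · -- verts
      ext w
      simp only [Digr.verts, Set.mem_setOf_eq, Set.mem_union, Set.mem_singleton_iff,
        List.mem_append, List.mem_cons]
      constructor
      · rintro (h | h | h | h | h) <;> tauto
      · rintro ((h | h | h) | h) <;> tauto
  -- counting
  set A := {w ∈ Digr.verts s | D.Adj w x} with hA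
  set B := {w ∈ Digr.verts s | D.Adj x w} with hB
  have hfin : (Digr.verts s).Finite := s.finite_toSet
  have hAs : A ⊆ Digr.verts s := fun w hw => hw.1
  have hBs : B ⊆ Digr.verts s := fun w hw => hw.1
  have hdisj : Disjoint A B := by
    rw [Set.disjoint_left]
    rintro w ⟨hw1, hw2⟩ ⟨_, hw3⟩
    exact hvb w hw1 ⟨hw2, hw3⟩
  have : D.degOn (Digr.verts s) x = (A ∪ B).ncard := by
    rw [Digr.degOn, Digr.inDegOn, Digr.outDegOn,
      Set.ncard_union_eq hdisj (hfin.subset hAs) (hfin.subset hBs)]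
  rw [this]
  exact Set.ncard_le_ncard (Set.union_subset hAs hBs) hfin
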